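/- Let G ∈ C²((0, ∞); ℝ) satisfy r G''(r) + 2 G'(r) ≥ 0 for all r > 0, let δ > 0, and let a < b be real numbers. Then the function x ↦ G(δ/(x − a)) + G(δ/(b − x)) is convex on the open interval (a, b). -/

import Mathlib

open Set

lemma convexOn_comp_neg {s : Set ℝ} {f : ℝ → ℝ} (h : ConvexOn ℝ s f) :
    ConvexOn ℝ {x | -x ∈ s} (fun x => f (-x)) := by
  refine ⟨fun x hx y hy p q hp hq hpq => ?_, fun x hx y hy p q hp hq hpq => ?_⟩
  · have := h.1 hx hy hp hq hpq
    simp only [Set.mem_setOf_eq, smul_eq_mul] at *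
    have e : -(p * x + q * y) = p * -x + q * -y := by ring
    rw [e]; exact this
  · have := h.2 hx hy hp hq hpq
    simp only [smul_eq_mul] at this ⊢
    have e : -(p * x + q * y) = p * -x + q * -y := by ring
    rw [e]; exact this

lemma aux_convex (G : ℝ → ℝ) (hG : ContDiffOn ℝ 2 G (Set.Ioi 0))
    (hineq : ∀ r : ℝ, 0 < r → 0 ≤ r * deriv (deriv G) r + 2 * deriv G r)
    (δ : ℝ) (hδ : 0 < δ) (a : ℝ) :
    ConvexOn ℝ (Set.Ioi a) (fun x => G (δ / (x - a))) := by
  have hG' : ContDiffOn ℝ 1 (deriv G) (Set.Ioi 0) :=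
    hG.deriv_of_isOpen isOpen_Ioi (by norm_num)
  -- inner function facts
  have hh : ∀ x : ℝ, a < x → HasDerivAt (fun y => δ / (y - a)) (-δ / (x - a) ^ 2) x := by
    intro x hx
    have hne : x - a ≠ 0 := sub_ne_zero.mpr hx.ne'
    have h1 : HasDerivAt (fun y : ℝ => y - a) 1 x := (hasDerivAt_id x).sub_const a
    have h2 := (h1.inv hne).const_mul δ
    have hfun : (fun y : ℝ => δ / (y - a)) = fun y => δ * (y - a)⁻¹ := by
      funext y; rw [div_eq_mul_inv]
    rw [hfun]
    exact h2.congr_deriv (by ring)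
  have hu : ∀ x : ℝ, a < x → 0 < δ / (x - a) := fun x hx =>
    div_pos hδ (sub_pos.mpr hx)
  have hGd : ∀ r : ℝ, 0 < r → HasDerivAt G (deriv G r) r := by
    intro r hr
    exact ((hG.contDiffAt (isOpen_Ioi.mem_nhds hr)).differentiableAt
      (by norm_num)).hasDerivAt
  have hGd2 : ∀ r : ℝ, 0 < r → HasDerivAt (deriv G) (deriv (deriv G) r) r := by
    intro r hr
    exact ((hG'.contDiffAt (isOpen_Ioi.mem_nhds hr)).differentiableAt
      (by norm_num)).hasDerivAt
  set f' : ℝ → ℝ := fun x => deriv G (δ / (x - a)) * (-δ / (x - a) ^ 2) with hf'def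
  set f'' : ℝ → ℝ := fun x =>
    deriv (deriv G) (δ / (x - a)) * (-δ / (x - a) ^ 2) * (-δ / (x - a) ^ 2)
      + deriv G (δ / (x - a)) * (2 * δ / (x - a) ^ 3) with hf''def
  have key1 : ∀ x ∈ Set.Ioi a, HasDerivAt (fun y => G (δ / (y - a))) (f' x) x := by
    intro x hx
    exact (hGd _ (hu x hx)).comp x (hh x hx)
  have key2 : ∀ x ∈ Set.Ioi a, HasDerivAt f' (f'' x) x := by
    intro x hx
    have h1 : HasDerivAt (fun y => deriv G (δ / (y - a)))
        (deriv (deriv G) (δ / (x - a)) * (-δ / (x - a) ^ 2)) x :=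
      by have := (hGd2 _ (hu x hx)).comp x (hh x hx); exact this
    have hne : x - a ≠ 0 := sub_ne_zero.mpr hx.ne'
    have h2 : HasDerivAt (fun y : ℝ => -δ / (y - a) ^ 2) (2 * δ / (x - a) ^ 3) x := by
      have hp : HasDerivAt (fun y : ℝ => (y - a) ^ 2) (2 * (x - a)) x := by
        have := ((hasDerivAt_id x).sub_const a).pow 2
        exact this.congr_deriv (by norm_num)
      have := (hp.inv (pow_ne_zero 2 hne)).const_mul (-δ)
      have hfun : (fun y : ℝ => -δ / (y - a) ^ 2) = fun y => -δ * ((y - a) ^ 2)⁻¹ := by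
        funext y; rw [div_eq_mul_inv]
      rw [hfun]
      exact this.congr_deriv (by field_simp)
    exact h1.mul h2
  apply convexOn_of_hasDerivWithinAt2_nonneg (convex_Ioi a) ?_
      (f' := f') (f'' := f'')
  · intro x hx
    rw [interior_Ioi] at hx
    exact (key1 x hx).hasDerivWithinAt
  · intro x hx
    rw [interior_Ioi] at hx
    exact (key2 x hx).hasDerivWithinAt
  · intro x hx
    rw [interior_Ioi] at hx
    have hup := hu x hx
    have hkey := hineq _ hup
    have htpos : (0:ℝ) < x - a := sub_pos.mpr hx
    have hne : x - a ≠ 0 := htpos.ne'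
    have : f'' x = δ / (x - a) ^ 3 *
        (δ / (x - a) * deriv (deriv G) (δ / (x - a)) + 2 * deriv G (δ / (x - a))) := by
      rw [hf''def]; field_simp
    rw [this]
    exact mul_nonneg (div_nonneg hδ.le (by positivity)) hkey
  · exact fun x hx => ((key1 x hx).continuousAt.continuousWithinAt)

/-- If `G ∈ C²((0,∞))` satisfies `r G''(r) + 2 G'(r) ≥ 0` on `(0,∞)`, then for `δ > 0`
and `a < b`, the function `x ↦ G(δ/(x−a)) + G(δ/(b−x))` is convex on `(a,b)`. -/
theorem stmt_9
    (G : ℝ → ℝ) (hG : ContDiffOn ℝ 2 G (Set.Ioi 0))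
    (hineq : ∀ r : ℝ, 0 < r → 0 ≤ r * deriv (deriv G) r + 2 * deriv G r)
    (δ : ℝ) (hδ : 0 < δ) (a b : ℝ) (hab : a < b) :
    ConvexOn ℝ (Set.Ioo a b) (fun x => G (δ / (x - a)) + G (δ / (b - x))) := by
  have h1 : ConvexOn ℝ (Set.Ioi a) (fun x => G (δ / (x - a))) :=
    aux_convex G hG hineq δ hδ a
  have h2' : ConvexOn ℝ (Set.Ioi (-b)) (fun x => G (δ / (x - (-b)))) :=
    aux_convex G hG hineq δ hδ (-b)
  have h2 : ConvexOn ℝ (Set.Iio b) (fun x => G (δ / (b - x))) := by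
    have A := convexOn_comp_neg h2'
    have hs : {x : ℝ | -x ∈ Set.Ioi (-b)} = Set.Iio b := by
      ext x; simp
    rw [hs] at A
    convert A using 2 with x
    ring_nf
  exact (h1.subset Set.Ioo_subset_Ioi_self (convex_Ioo a b)).add
    (h2.subset Set.Ioo_subset_Iio_self (convex_Ioo a b))
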